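/- Let h_1, …, h_m be the primitive support linear forms of the cone σ^∨ (so 𝐚 ∈ S iff h_i(𝐚) ≥ 0 for all i, for 𝐚 ∈ ℤ^d), let 𝐝 ∈ ℤ^d with −𝐝 ∈ S, and define H_𝐝(𝐚) = ∏_i ∏_{k=0}^{h_i(−𝐝)−1} (h_i(𝐚) − k). Then for 𝐚 ∈ S: H_𝐝(𝐚) > 0 if and only if 𝐚 + 𝐝 ∈ S, and H_𝐝(𝐚) = 0 otherwise. -/
import Mathlib

lemma desc_pos_of_le (x : ℤ) (n : ℕ) (hn : (n : ℤ) ≤ x) :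
    0 < ∏ k ∈ Finset.range n, (x - (k : ℤ)) := by
  apply Finset.prod_pos
  intro k hk
  have : (k : ℤ) < n := by exact_mod_cast Finset.mem_range.mp hk
  omega

lemma desc_zero_of_lt (x : ℤ) (hx : 0 ≤ x) (n : ℕ) (hn : x < (n : ℤ)) :
    ∏ k ∈ Finset.range n, (x - (k : ℤ)) = 0 := by
  apply Finset.prod_eq_zero (i := x.toNat)
  · exact Finset.mem_range.mpr (by omega)
  · omega

/-- for a ∈ S, H_d(a) > 0 iff a + d ∈ S, and H_d(a) = 0 otherwise. -/
theorem Hd_pos_iff (d m : ℕ) (h : Fin m → ((Fin d → ℤ) →ₗ[ℤ] ℤ))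
    (S : Set (Fin d → ℤ)) (hS : ∀ a, a ∈ S ↔ ∀ i, 0 ≤ h i a)
    (dv : Fin d → ℤ) (hdS : -dv ∈ S) (a : Fin d → ℤ) (ha : a ∈ S) :
    (0 < ∏ i, ∏ k ∈ Finset.range (h i (-dv)).toNat, (h i a - (k : ℤ)) ↔ a + dv ∈ S) ∧
    (a + dv ∉ S → ∏ i, ∏ k ∈ Finset.range (h i (-dv)).toNat, (h i a - (k : ℤ)) = 0) := by
  have hd : ∀ i, 0 ≤ h i (-dv) := (hS _).mp hdS
  have haS : ∀ i, 0 ≤ h i a := (hS _).mp ha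
  have hkey : ∀ i, h i (a + dv) = h i a - h i (-dv) := by
    intro i; simp [map_add, map_neg]
  have hmem : a + dv ∈ S ↔ ∀ i, ((h i (-dv)).toNat : ℤ) ≤ h i a := by
    rw [hS]
    refine forall_congr' fun i => ?_
    rw [hkey i, Int.toNat_of_nonneg (hd i)]
    omega
  constructor
  · rw [hmem]
    constructor
    · intro hpos i
      by_contra hlt
      push_neg at hlt
      have := desc_zero_of_lt (h i a) (haS i) _ hlt
      have hz : ∏ i, ∏ k ∈ Finset.range (h i (-dv)).toNat, (h i a - (k : ℤ)) = 0 :=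
        Finset.prod_eq_zero (Finset.mem_univ i) this
      omega
    · intro hle
      exact Finset.prod_pos fun i _ => desc_pos_of_le _ _ (hle i)
  · intro hnot
    rw [hmem] at hnot
    push_neg at hnot
    obtain ⟨i, hi⟩ := hnot
    exact Finset.prod_eq_zero (Finset.mem_univ i) (desc_zero_of_lt _ (haS i) _ hi)
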